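/- (Polynomial identity from the proof of Corollary on the fixed data of four fixed points, the case m = 1.) In R = MvPolynomial (Fin k) (ZMod 2), writing ∏M for the product of all elements of a multiset M, the following identity holds: (∏E)·(∏H)·(∏Λ) + (∏Γ)·(∏Δ)·(∏Λ) + (∏B)·(∏Δ)·(∏H) + (∏B)·(∏Γ)·(∏E) = 0. -/
import Mathlib


open MvPolynomial

open Finset

noncomputable def F0 {k : ℕ} (G : Finset (Fin k)) (t : MvPolynomial (Fin k) (ZMod 2)) :
    MvPolynomial (Fin k) (ZMod 2) :=
  ∏ S ∈ G.powerset.filter (fun S => Even S.card), (t + ∑ i ∈ S, X i)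

noncomputable def F1 {k : ℕ} (G : Finset (Fin k)) (t : MvPolynomial (Fin k) (ZMod 2)) :
    MvPolynomial (Fin k) (ZMod 2) :=
  ∏ S ∈ G.powerset.filter (fun S => ¬ Even S.card), (t + ∑ i ∈ S, X i)

lemma filter_split {k : ℕ} (G : Finset (Fin k)) (a : Fin k) (ha : a ∉ G)
    (p : Finset (Fin k) → Prop) [DecidablePred p]
    (f : Finset (Fin k) → MvPolynomial (Fin k) (ZMod 2)) :
    ∏ S ∈ (insert a G).powerset.filter p, f S =
      (∏ S ∈ G.powerset.filter p, f S) *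
        ∏ S ∈ G.powerset.filter (fun S => p (insert a S)), f (insert a S) := by
  rw [Finset.powerset_insert, Finset.filter_union]
  rw [Finset.prod_union]
  · congr 1
    rw [Finset.prod_filter (fun S => p (insert a S))]
    rw [Finset.prod_filter p]
    rw [Finset.prod_image (fun x hx y hy h => by
      have hxa : a ∉ x := fun hm => ha ((Finset.mem_powerset.1 hx) hm)
      have hya : a ∉ y := fun hm => ha ((Finset.mem_powerset.1 hy) hm)
      have := congrArg (Finset.erase · a) h
      simpa [Finset.erase_insert hxa, Finset.erase_insert hya] using this)]
  · rw [Finset.disjoint_left]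
    intro S hS hS'
    have h1 : a ∉ S := fun hm =>
      ha ((Finset.mem_powerset.1 (Finset.mem_filter.1 hS).1) hm)
    obtain ⟨T, hT, hTe⟩ := Finset.mem_image.1 (Finset.mem_filter.1 hS').1
    exact h1 (hTe ▸ Finset.mem_insert_self a T)

lemma F0_insert {k : ℕ} (G : Finset (Fin k)) (a : Fin k) (ha : a ∉ G)
    (t : MvPolynomial (Fin k) (ZMod 2)) :
    F0 (insert a G) t = F0 G t * F1 G (t + X a) := by
  rw [F0, filter_split G a ha]
  congr 1
  rw [F1]
  apply Finset.prod_congr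
  · apply Finset.filter_congr
    intro S hS
    have haS : a ∉ S := fun hm => ha ((Finset.mem_powerset.1 hS) hm)
    rw [Finset.card_insert_of_notMem haS, Nat.even_add_one]
  · intro S hS
    have haS : a ∉ S := fun hm =>
      ha ((Finset.mem_powerset.1 (Finset.mem_filter.1 hS).1) hm)
    rw [Finset.sum_insert haS]
    ring

lemma F1_insert {k : ℕ} (G : Finset (Fin k)) (a : Fin k) (ha : a ∉ G)
    (t : MvPolynomial (Fin k) (ZMod 2)) :
    F1 (insert a G) t = F1 G t * F0 G (t + X a) := by
  rw [F1, filter_split G a ha]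
  congr 1
  rw [F0]
  apply Finset.prod_congr
  · apply Finset.filter_congr
    intro S hS
    have haS : a ∉ S := fun hm => ha ((Finset.mem_powerset.1 hS) hm)
    rw [Finset.card_insert_of_notMem haS, Nat.even_add_one]
    tauto
  · intro S hS
    have haS : a ∉ S := fun hm =>
      ha ((Finset.mem_powerset.1 (Finset.mem_filter.1 hS).1) hm)
    rw [Finset.sum_insert haS]
    ring

lemma F0_singleton {k : ℕ} (a : Fin k) (t : MvPolynomial (Fin k) (ZMod 2)) :
    F0 {a} t = t := by
  rw [F0]
  rw [show ({a} : Finset (Fin k)).powerset.filter (fun S => Even S.card) = {∅} from by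
    ext S
    simp only [Finset.mem_filter, Finset.mem_powerset, Finset.subset_singleton_iff,
      Finset.mem_singleton]
    constructor
    · rintro ⟨rfl | rfl, he⟩
      · rfl
      · simp at he
    · rintro rfl; simp]
  simp

lemma F1_singleton {k : ℕ} (a : Fin k) (t : MvPolynomial (Fin k) (ZMod 2)) :
    F1 {a} t = t + X a := by
  rw [F1]
  rw [show ({a} : Finset (Fin k)).powerset.filter (fun S => ¬ Even S.card) = {{a}} from by
    ext S
    simp only [Finset.mem_filter, Finset.mem_powerset, Finset.subset_singleton_iff,
      Finset.mem_singleton]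
    constructor
    · rintro ⟨rfl | rfl, he⟩
      · simp at he
      · rfl
    · rintro rfl; simp]
  simp

lemma F_add {k : ℕ} {G : Finset (Fin k)} (hG : G.Nonempty) :
    (∀ u v, F0 G (u + v) = F0 G u + F0 G v) ∧
    (∀ u v, F1 G u + F1 G v = F0 G (u + v)) := by
  have h2 : (2 : MvPolynomial (Fin k) (ZMod 2)) = 0 := CharTwo.two_eq_zero
  induction hG using Finset.Nonempty.cons_induction with
  | singleton a =>
      refine ⟨fun u v => by rw [F0_singleton, F0_singleton, F0_singleton], fun u v => ?_⟩
      rw [F1_singleton, F1_singleton, F0_singleton]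
      linear_combination (X a) * h2
  | cons a s ha hs IH =>
      obtain ⟨A, Bb⟩ := IH
      have hx0 : X a + X a = (0 : MvPolynomial (Fin k) (ZMod 2)) :=
        CharTwo.add_self_eq_zero _
      have harg : ∀ w : MvPolynomial (Fin k) (ZMod 2), w + X a + X a = w := fun w => by
        linear_combination hx0
      have hB1 : ∀ w, F1 s (w + X a) = F0 s w - F1 s (X a) := by
        intro w
        have h := Bb (w + X a) (X a)
        rw [harg w] at h
        exact eq_sub_of_add_eq h
      have hB1' : ∀ w, F1 s w = F0 s (w + X a) - F1 s (X a) := fun w =>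
        eq_sub_of_add_eq (Bb w (X a))
      constructor
      · intro u v
        rw [Finset.cons_eq_insert, F0_insert s a ha, F0_insert s a ha, F0_insert s a ha,
          hB1 (u + v), hB1 u, hB1 v, A u v]
        linear_combination (F0 s u * F0 s v) * h2
      · intro u v
        rw [Finset.cons_eq_insert, F1_insert s a ha, F1_insert s a ha, F0_insert s a ha,
          hB1 (u + v), hB1' u, hB1' v]
        have e5 : F0 s (u + v) = F0 s (u + X a) + F0 s (v + X a) := by
          have h := A (u + X a) (v + X a)
          rw [show u + X a + (v + X a) = u + v from by linear_combination hx0] at h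
          exact h
        rw [e5]
        linear_combination (-(F0 s (u + X a) * F0 s (v + X a))) * h2



theorem four_fixed_points_polynomial_identity (k : ℕ) (hk : 3 ≤ k)
    (y z : MvPolynomial (Fin k) (ZMod 2))
    (hy : y = X ⟨k - 2, by omega⟩) (hz : z = X ⟨k - 1, by omega⟩)
    (B Γm Δm Em Hm Λm : Multiset (MvPolynomial (Fin k) (ZMod 2)))
    (hB : B = (Finset.univ.filter
        (fun S : Finset (Fin k) => Odd S.card ∧ ∀ i ∈ S, (i : ℕ) < k - 2)).val.map
        (fun S => ∑ i ∈ S, X i))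
    (hΓ : Γm = B.map (fun b => y + X ⟨0, by omega⟩ + b))
    (hΔ : Δm = B.map (fun b => z + X ⟨0, by omega⟩ + b))
    (hE : Em = B.map (fun b => y + b))
    (hH : Hm = B.map (fun b => z + b))
    (hΛ : Λm = B.map (fun b => y + z + X ⟨0, by omega⟩ + b))
    :
    Em.prod * Hm.prod * Λm.prod + Γm.prod * Δm.prod * Λm.prod
      + B.prod * Δm.prod * Hm.prod + B.prod * Γm.prod * Em.prod = 0 := by

  have h2 : (2 : MvPolynomial (Fin k) (ZMod 2)) = 0 := CharTwo.two_eq_zero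
  set G : Finset (Fin k) := Finset.univ.filter (fun i : Fin k => (i : ℕ) < k - 2) with hG
  set x0 : MvPolynomial (Fin k) (ZMod 2) := X ⟨0, by omega⟩ with hx0def
  have hi0G : (⟨0, by omega⟩ : Fin k) ∈ G := by
    rw [hG]
    simp only [Finset.mem_filter, Finset.mem_univ, true_and]
    show (0 : ℕ) < k - 2
    omega
  have hGne : G.Nonempty := ⟨_, hi0G⟩
  obtain ⟨hA, hB2⟩ := F_add hGne
  have hmemG : ∀ i : Fin k, i ∈ G ↔ (i : ℕ) < k - 2 := fun i => by
    rw [hG]; simp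
  have hBset : Finset.univ.filter
      (fun S : Finset (Fin k) => Odd S.card ∧ ∀ i ∈ S, (i : ℕ) < k - 2)
      = G.powerset.filter (fun S => ¬ Even S.card) := by
    ext S
    simp only [Finset.mem_filter, Finset.mem_univ, true_and, Finset.mem_powerset,
      Nat.not_even_iff_odd, Finset.subset_iff, hmemG]
    tauto
  have hBmap : ∀ t, (B.map (fun b => t + b)).prod = F1 G t := by
    intro t
    rw [hB, Multiset.map_map, F1, Finset.prod_eq_multiset_prod, hBset]
    rfl
  have hBprod : B.prod = F1 G 0 := by
    rw [hB, F1, Finset.prod_eq_multiset_prod, hBset]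
    congr 1
    apply Multiset.map_congr rfl
    intro S _
    rw [zero_add]
  have hxx : x0 + x0 = 0 := CharTwo.add_self_eq_zero _
  have hd : F1 G x0 = 0 := by
    rw [F1]
    apply Finset.prod_eq_zero (i := ({⟨0, by omega⟩} : Finset (Fin k)))
    · rw [Finset.mem_filter, Finset.mem_powerset]
      exact ⟨Finset.singleton_subset_iff.2 hi0G, by simp⟩
    · rw [Finset.sum_singleton]
      exact hxx
  have hF1 : ∀ u, F1 G u = F0 G (u + x0) := by
    intro u
    have h := hB2 u x0
    rw [hd, add_zero] at h
    exact h
  set a := F0 G y with hadef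
  set b := F0 G z with hbdef
  set c := F0 G x0 with hcdef
  have hEp : Em.prod = a + c := by
    rw [hE, hBmap y, hF1 y, hA y x0]
  have hHp : Hm.prod = b + c := by
    rw [hH, hBmap z, hF1 z, hA z x0]
  have hΓp : Γm.prod = a := by
    rw [hΓ, hBmap (y + x0), hF1 (y + x0),
      show y + x0 + x0 = y from by linear_combination hxx]
  have hΔp : Δm.prod = b := by
    rw [hΔ, hBmap (z + x0), hF1 (z + x0),
      show z + x0 + x0 = z from by linear_combination hxx]
  have hΛp : Λm.prod = a + b := by
    rw [hΛ, hBmap (y + z + x0), hF1 (y + z + x0),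
      show y + z + x0 + x0 = y + z from by linear_combination hxx, hA y z]
  have hBp : B.prod = c := by
    rw [hBprod, hF1 0, zero_add]
  rw [hEp, hHp, hΓp, hΔp, hΛp, hBp]
  linear_combination (a^2*b + a*b^2 + a^2*c + b^2*c + a*c^2 + b*c^2 + a*b*c) * h2
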